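/- Let n ≥ 2 and let p' be a permutation of {1, 2, …, n−1} such that s(p') avoids both 132 and 312. Then the two permutations of length n obtained by prepending the entry n to p' and by appending the entry n to p' both have the property that their stack-sorted image avoids 132 and 312; moreover, distinct choices of p' and of prepend/append give distinct permutations, so this construction contributes exactly 2·|s^{-1}(Av_{n-1}(132,312))| permutations of length n whose stack-sorted image avoids 132 and 312 and in which n is the first or last entry. -/

import Mathlib

/-- The stack-sorting map `s`, implemented with a fuel parameter (the fuel
`l.length` always suffices, since the maximum of a nonempty list of naturals is
attained, so both recursive calls are on strictly shorter lists).
`s(ε) = ε` and `s(LmR) = s(L) s(R) m` where `m` is the maximum entry. -/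
def stackSortAux : ℕ → List ℕ → List ℕ
  | 0, _ => []
  | _ + 1, [] => []
  | fuel + 1, a :: t =>
      let m := (a :: t).foldr max 0
      stackSortAux fuel ((a :: t).takeWhile (fun x => x ≠ m)) ++
        stackSortAux fuel (((a :: t).dropWhile (fun x => x ≠ m)).tail) ++ [m]

/-- The stack-sorting map on finite sequences of (distinct) naturals. -/
def stackSort (l : List ℕ) : List ℕ := stackSortAux l.length l

/-- `l` is a permutation of `{1, 2, …, n}`, written in one-line notation. -/
def IsPermList (n : ℕ) (l : List ℕ) : Prop :=
  l.Perm ((List.range n).map (· + 1))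

/-- The sequence `p` contains the pattern `q`: there is a strictly increasing choice
of positions of `p` on which the entries compare exactly as the entries of `q` do. -/
def ContainsPat (p q : List ℕ) : Prop :=
  ∃ f : Fin q.length → Fin p.length, StrictMono f ∧
    ∀ i j : Fin q.length, q.get i < q.get j ↔ p.get (f i) < p.get (f j)

/-- The sequence `p` avoids the pattern `q`. -/
def AvoidsPat (p q : List ℕ) : Prop := ¬ ContainsPat p q

lemma foldr_max_le {n : ℕ} : ∀ {l : List ℕ}, (∀ x ∈ l, x ≤ n) → l.foldr max 0 ≤ n
  | [], _ => Nat.zero_le n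
  | a :: t, h => by
    simp only [List.foldr_cons]
    exact max_le (h a (by simp)) (foldr_max_le fun x hx => h x (by simp [hx]))

lemma foldr_max_cons_self {n : ℕ} {l : List ℕ} (h : ∀ x ∈ l, x ≤ n) :
    (n :: l).foldr max 0 = n := by
  simp only [List.foldr_cons]
  exact max_eq_left (foldr_max_le h)

lemma takeWhile_ne_append {n : ℕ} : ∀ {l : List ℕ}, (∀ x ∈ l, x ≠ n) →
    (l ++ [n]).takeWhile (fun x => x ≠ n) = l
  | [], _ => by simp
  | a :: t, h => by
    simp only [List.cons_append, List.takeWhile_cons]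
    rw [if_pos (by simp [h a (by simp)]), takeWhile_ne_append fun x hx => h x (by simp [hx])]

lemma dropWhile_ne_append {n : ℕ} : ∀ {l : List ℕ}, (∀ x ∈ l, x ≠ n) →
    (l ++ [n]).dropWhile (fun x => x ≠ n) = [n]
  | [], _ => by simp
  | a :: t, h => by
    simp only [List.cons_append, List.dropWhile_cons]
    rw [if_pos (by simp [h a (by simp)])]
    exact dropWhile_ne_append fun x hx => h x (by simp [hx])

lemma foldr_max_append {n : ℕ} : ∀ {l : List ℕ}, (∀ x ∈ l, x ≤ n) →
    (l ++ [n]).foldr max 0 = n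
  | [], _ => by simp
  | a :: t, h => by
    have ih := foldr_max_append (n := n) (l := t) fun x hx => h x (by simp [hx])
    simp only [List.cons_append, List.foldr_cons, ih]
    exact max_eq_right (h a (by simp))

lemma stackSort_cons_max {p' : List ℕ} {n : ℕ} (h : ∀ x ∈ p', x < n) :
    stackSort (n :: p') = stackSort p' ++ [n] := by
  have hm : (n :: p').foldr max 0 = n := foldr_max_cons_self fun x hx => (h x hx).le
  show stackSortAux (p'.length + 1) (n :: p') = _
  rw [stackSortAux]
  simp only [hm]
  have h1 : (n :: p').takeWhile (fun x => x ≠ n) = [] := by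
    simp [List.takeWhile_cons]
  have h2 : ((n :: p').dropWhile (fun x => x ≠ n)).tail = p' := by
    rw [List.dropWhile_cons, if_neg (by simp)]
    rfl
  rw [h1, h2]
  simp [stackSort]
  cases p' <;> simp [stackSortAux]

lemma stackSort_append_max {p' : List ℕ} {n : ℕ} (h : ∀ x ∈ p', x < n) :
    stackSort (p' ++ [n]) = stackSort p' ++ [n] := by
  match p' with
  | [] => simp [stackSort, stackSortAux]
  | a :: t =>
    have hne : ∀ x ∈ a :: t, x ≠ n := fun x hx => (h x hx).ne
    have hm : ((a :: t) ++ [n]).foldr max 0 = n := foldr_max_append fun x hx => (h x hx).le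
    show stackSortAux ((a :: t ++ [n]).length) (a :: (t ++ [n])) = _
    have hlen : (a :: t ++ [n]).length = (t.length + 1) + 1 := by simp
    rw [hlen, stackSortAux]
    simp only [← List.cons_append, hm]
    rw [takeWhile_ne_append hne, dropWhile_ne_append hne]
    simp [stackSort, stackSortAux]

lemma avoidsPat_of_avoidsPat_append {l : List ℕ} {n : ℕ} {q : List ℕ}
    (h : AvoidsPat (l ++ [n]) q) : AvoidsPat l q := by
  rintro ⟨f, hmono, hcond⟩
  refine h ⟨fun i => (f i).castLE (by simp), fun i j hij => ?_, fun i j => ?_⟩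
  · simp only [Fin.lt_def, Fin.coe_castLE]
    exact hmono hij
  · rw [hcond i j]
    simp only [List.get_eq_getElem, Fin.coe_castLE]
    rw [List.getElem_append_left (f i).isLt, List.getElem_append_left (f j).isLt]

lemma avoidsPat_append_of_avoidsPat {l : List ℕ} {n : ℕ} {q : List ℕ}
    (hl : ∀ x ∈ l, x < n) (hq : q.length = 3) {a : ℕ} (ha : a < 2)
    (hgt : ¬ q.get ⟨a, by omega⟩ < q.get ⟨2, by omega⟩)
    (hav : AvoidsPat l q) : AvoidsPat (l ++ [n]) q := by
  rintro ⟨f, hmono, hcond⟩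
  set i2 : Fin q.length := ⟨2, by omega⟩ with hi2
  rcases lt_or_eq_of_le (Nat.lt_succ_iff.mp (by simpa using (f i2).isLt)) with h2 | h2
  · -- all indices land in l
    have hle : ∀ i : Fin q.length, (f i : ℕ) < l.length := by
      intro i
      have : f i ≤ f i2 := hmono.monotone (Fin.le_def.mpr (show (i : ℕ) ≤ 2 by have := i.isLt; omega))
      exact lt_of_le_of_lt this h2
    refine hav ⟨fun i => ⟨f i, hle i⟩, fun i j hij => ?_, fun i j => ?_⟩
    · simp only [Fin.lt_def]
      exact hmono hij
    · rw [hcond i j]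
      simp only [List.get_eq_getElem]
      rw [List.getElem_append_left (hle i), List.getElem_append_left (hle j)]
  · -- f i2 is the last position, with value n
    set ia : Fin q.length := ⟨a, by omega⟩ with hia
    have hlt : (f ia : ℕ) < l.length := by
      have : f ia < f i2 := hmono (by simp [Fin.lt_def, hia, hi2]; omega)
      omega
    have hvn : (l ++ [n]).get (f i2) = n := by
      simp only [List.get_eq_getElem]
      rw [List.getElem_append_right (le_of_eq h2.symm)]
      simp [← h2]
    have hva : (l ++ [n]).get (f ia) < n := by
      simp only [List.get_eq_getElem]
      rw [List.getElem_append_left hlt]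
      exact hl _ (List.getElem_mem hlt)
    exact hgt ((hcond ia i2).mpr (by rw [hvn]; exact hva))

lemma foldr_max_mem (a : ℕ) (t : List ℕ) : (a :: t).foldr max 0 ∈ a :: t := by
  induction t generalizing a with
  | nil => simp
  | cons b s ih =>
    simp only [List.foldr_cons] at *
    rcases max_cases a (max b (s.foldr max 0)) with ⟨h, _⟩ | ⟨h, _⟩
    · rw [h]; exact List.mem_cons_self
    · rw [h]; exact List.mem_cons_of_mem _ (ih b)

lemma mem_stackSortAux : ∀ (fuel : ℕ) (l : List ℕ) (x : ℕ), x ∈ stackSortAux fuel l → x ∈ l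
  | 0, _, x => by simp [stackSortAux]
  | _+1, [], x => by simp [stackSortAux]
  | fuel+1, a :: t, x => by
    intro hx
    rw [stackSortAux] at hx
    simp only [List.mem_append, List.mem_singleton] at hx
    rcases hx with (hx | hx) | hx
    · exact (List.takeWhile_sublist _).subset (mem_stackSortAux fuel _ x hx)
    · exact ((List.tail_sublist _).trans (List.dropWhile_sublist _)).subset
        (mem_stackSortAux fuel _ x hx)
    · exact hx ▸ foldr_max_mem a t

lemma mem_stackSort {l : List ℕ} {x : ℕ} (h : x ∈ stackSort l) : x ∈ l :=
  mem_stackSortAux _ _ _ h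

/-- let `n ≥ 2` and let `p'` be a permutation of `{1, …, n-1}`
with `s(p')` avoiding both `132` and `312`. Then prepending and appending the
entry `n` to `p'` both yield permutations whose stack-sorted image avoids `132`
and `312`; distinct choices of `p'` and of prepend/append give distinct
permutations, and this construction contributes exactly
`2·|s⁻¹(Av_{n-1}(132, 312))|` permutations of length `n` whose stack-sorted
image avoids `132` and `312` and in which `n` is the first or last entry. -/
theorem prepend_append_av132_312 (n : ℕ) (hn : 2 ≤ n) :
    (∀ p' : List ℕ, IsPermList (n - 1) p' →
      AvoidsPat (stackSort p') [1,3,2] → AvoidsPat (stackSort p') [3, 1, 2] →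
        (AvoidsPat (stackSort (n :: p')) [1,3,2] ∧
          AvoidsPat (stackSort (n :: p')) [3, 1, 2]) ∧
        (AvoidsPat (stackSort (p' ++ [n])) [1,3,2] ∧
          AvoidsPat (stackSort (p' ++ [n])) [3, 1, 2])) ∧
    (∀ p₁ p₂ : List ℕ, IsPermList (n - 1) p₁ → IsPermList (n - 1) p₂ →
      n :: p₁ ≠ p₂ ++ [n]) ∧
    Nat.card {p : List ℕ // IsPermList n p ∧
        AvoidsPat (stackSort p) [1,3,2] ∧ AvoidsPat (stackSort p) [3, 1, 2] ∧
        (p.head? = some n ∨ p.getLast? = some n)} =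
      2 * Nat.card {p' : List ℕ // IsPermList (n - 1) p' ∧
        AvoidsPat (stackSort p') [1,3,2] ∧ AvoidsPat (stackSort p') [3, 1, 2]} := by
  have hm1 : n - 1 + 1 = n := by omega
  set T' : List ℕ := (List.range (n - 1)).map (· + 1) with hT'
  have htarget : ((List.range n).map (· + 1)).Perm (n :: T') := by
    rw [← hm1, List.range_succ, List.map_append]
    simp only [List.map_cons, List.map_nil, hm1]
    exact List.perm_append_singleton n T'
  -- basic facts about permutations of {1,…,n-1}
  have hlt : ∀ {p' : List ℕ}, IsPermList (n - 1) p' → ∀ x ∈ p', x < n := by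
    intro p' hp x hx
    have : x ∈ T' := hp.mem_iff.mp hx
    simp only [hT', List.mem_map, List.mem_range] at this
    obtain ⟨k, hk, rfl⟩ := this
    omega
  have hnotmem : ∀ {p' : List ℕ}, IsPermList (n - 1) p' → n ∉ p' := by
    intro p' hp hmem
    exact lt_irrefl n (hlt hp n hmem)
  have hlen : ∀ {p' : List ℕ}, IsPermList (n - 1) p' → p'.length = n - 1 := by
    intro p' hp
    simpa using hp.length_eq
  have hSlt : ∀ {p' : List ℕ}, IsPermList (n - 1) p' → ∀ x ∈ stackSort p', x < n :=
    fun hp x hx => hlt hp x (mem_stackSort hx)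
  -- part 1 as a reusable statement
  have main1 : ∀ p' : List ℕ, IsPermList (n - 1) p' →
      AvoidsPat (stackSort p') [1,3,2] → AvoidsPat (stackSort p') [3, 1, 2] →
        (AvoidsPat (stackSort p' ++ [n]) [1,3,2] ∧
          AvoidsPat (stackSort p' ++ [n]) [3, 1, 2]) := by
    intro p' hp hav1 hav2
    constructor
    · exact avoidsPat_append_of_avoidsPat (hSlt hp) rfl (a := 1) (by norm_num)
        (by decide) hav1
    · exact avoidsPat_append_of_avoidsPat (hSlt hp) rfl (a := 0) (by norm_num)
        (by decide) hav2
  -- part 2 as a reusable statement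
  have main2 : ∀ p₁ p₂ : List ℕ, IsPermList (n - 1) p₁ → IsPermList (n - 1) p₂ →
      n :: p₁ ≠ p₂ ++ [n] := by
    intro p₁ p₂ h1 h2 heq
    have hne : p₂ ≠ [] := by
      intro h
      rw [h] at h2
      have := hlen h2
      simp at this
      omega
    obtain ⟨b, t, rfl⟩ := List.exists_cons_of_ne_nil hne
    rw [List.cons_append, List.cons.injEq] at heq
    exact hnotmem h2 (heq.1 ▸ List.mem_cons_self)
  refine ⟨fun p' hp hav1 hav2 => ⟨?_, ?_⟩, main2, ?_⟩
  · rw [stackSort_cons_max (hlt hp)]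
    exact main1 p' hp hav1 hav2
  · rw [stackSort_append_max (hlt hp)]
    exact main1 p' hp hav1 hav2
  -- part 3: counting
  set S : Set (List ℕ) := {p' | IsPermList (n - 1) p' ∧
      AvoidsPat (stackSort p') [1,3,2] ∧ AvoidsPat (stackSort p') [3, 1, 2]} with hSdef
  set A : Set (List ℕ) := {p | IsPermList n p ∧
      AvoidsPat (stackSort p) [1,3,2] ∧ AvoidsPat (stackSort p) [3, 1, 2] ∧
      (p.head? = some n ∨ p.getLast? = some n)} with hAdef
  have hSfin : S.Finite := by
    have hfin : {l : List ℕ | l.Perm T'}.Finite :=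
      Set.Finite.ofFinset T'.permutations.toFinset
        (by intro x; simp [List.mem_permutations, IsPermList])
    exact hfin.subset fun p hp => hp.1
  have key : A = (fun p' => n :: p') '' S ∪ (fun p' => p' ++ [n]) '' S := by
    ext p
    constructor
    · rintro ⟨hperm, ha1, ha2, hend | hend⟩
      · -- p starts with n
        obtain ⟨t, rfl⟩ : ∃ t, p = n :: t := by
          cases p with
          | nil => simp at hend
          | cons a t =>
            exact ⟨t, by rw [(by simpa using hend : a = n)]⟩
        have ht : IsPermList (n - 1) t :=
          (List.perm_cons n).mp (hperm.trans htarget)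
        rw [stackSort_cons_max (hlt ht)] at ha1 ha2
        exact Or.inl ⟨t, ⟨ht, avoidsPat_of_avoidsPat_append ha1,
          avoidsPat_of_avoidsPat_append ha2⟩, rfl⟩
      · -- p ends with n
        have hne : p ≠ [] := by
          intro h; rw [h] at hend; simp at hend
        have hlast : p.getLast hne = n := by
          rw [List.getLast?_eq_getLast hne] at hend
          simpa using hend
        have hpe : p.dropLast ++ [n] = p := by
          rw [← hlast]; exact List.dropLast_append_getLast hne
        set t := p.dropLast with htdef
        have ht : IsPermList (n - 1) t := by
          have h1 : (t ++ [n]).Perm (n :: T') := by rw [hpe]; exact hperm.trans htarget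
          have h2 : (n :: t).Perm (n :: T') :=
            ((List.perm_append_singleton n t).symm.trans h1)
          exact (List.perm_cons n).mp h2
        have hst : stackSort p = stackSort t ++ [n] := by
          rw [← hpe]; exact stackSort_append_max (hlt ht)
        rw [hst] at ha1 ha2
        exact Or.inr ⟨t, ⟨ht, avoidsPat_of_avoidsPat_append ha1,
          avoidsPat_of_avoidsPat_append ha2⟩, hpe⟩
    · rintro (⟨p', ⟨hp, h1, h2⟩, rfl⟩ | ⟨p', ⟨hp, h1, h2⟩, rfl⟩)
      · refine ⟨(hp.cons n).trans htarget.symm, ?_, ?_, Or.inl rfl⟩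
        · rw [stackSort_cons_max (hlt hp)]; exact (main1 p' hp h1 h2).1
        · rw [stackSort_cons_max (hlt hp)]; exact (main1 p' hp h1 h2).2
      · refine ⟨((List.perm_append_singleton n p').trans (hp.cons n)).trans
          htarget.symm, ?_, ?_, Or.inr (by simp)⟩
        · rw [stackSort_append_max (hlt hp)]; exact (main1 p' hp h1 h2).1
        · rw [stackSort_append_max (hlt hp)]; exact (main1 p' hp h1 h2).2
  have hdisj : Disjoint ((fun p' => n :: p') '' S) ((fun p' => p' ++ [n]) '' S) := by
    rw [Set.disjoint_left]
    rintro x ⟨p₁, hp₁, rfl⟩ ⟨p₂, hp₂, heq⟩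
    exact main2 p₁ p₂ hp₁.1 hp₂.1 heq.symm
  have lhs_eq : Nat.card {p : List ℕ // IsPermList n p ∧
      AvoidsPat (stackSort p) [1,3,2] ∧ AvoidsPat (stackSort p) [3, 1, 2] ∧
      (p.head? = some n ∨ p.getLast? = some n)} = A.ncard :=
    Nat.card_coe_set_eq A
  have rhs_eq : Nat.card {p' : List ℕ // IsPermList (n - 1) p' ∧
      AvoidsPat (stackSort p') [1,3,2] ∧ AvoidsPat (stackSort p') [3, 1, 2]} = S.ncard :=
    Nat.card_coe_set_eq S
  rw [lhs_eq, rhs_eq, key,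
    Set.ncard_union_eq hdisj (hSfin.image _) (hSfin.image _),
    Set.ncard_image_of_injective S List.cons_injective,
    Set.ncard_image_of_injective S (List.append_left_injective [n])]
  ring
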